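/- Let X be a (q+1)-regular graph (q≥1) on which Γ acts freely and with finite quotient B=X/Γ. For every real u with 0<|u|<1/q, setting v:=1/(qu), the completed zeta function Ξ_{X,Γ}(u) := (1+qu²)^{|VB|}·det_Γ(Δ(u))^{−1} satisfies the functional equation Ξ_{X,Γ}(u) = Ξ_{X,Γ}(1/(qu)), i.e. (1+qu²)^{|VB|}·det_Γ(Δ(u))^{−1} = (1+qv²)^{|VB|}·det_Γ(Δ(v))^{−1}. (Via the determinant formula Z_{X,Γ}(u)=(1−u²)^{χ(B)}det_Γ(Δ(u))^{−1}, this expression equals (1−u²)^{−χ(B)}(1+qu²)^{|VB|}Z_{X,Γ}(u).) -/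

import Mathlib

open scoped ComplexConjugate ENNReal

noncomputable section

private lemma tsum_fiberwise' {E V M : Type*} [AddCommGroup M] [UniformSpace M]
    [IsUniformAddGroup M] [T2Space M] [CompleteSpace M] (π : E → V) {G : E → M} {a : M}
    (hG : HasSum G a) :
    HasSum (fun v => ∑' e : {e : E // π e = v}, G e.1) a :=
  hG.tsum_fiberwise π

private lemma tsum_comp_fiber {E V : Type*} (π : E → V) (m : ℕ)
    (hfin : ∀ v, Finite {e : E // π e = v})
    (hcard : ∀ v, Nat.card {e : E // π e = v} = m)
    {g : V → ℝ} (hg0 : ∀ v, 0 ≤ g v) (hg : Summable g) :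
    Summable (fun e => g (π e)) ∧ ∑' e, g (π e) = m * ∑' v, g v := by
  have key : ∀ v, ∑' e : {e : E // π e = v}, g (π e.1) = m * g v := by
    intro v
    have h1 : ∀ e : {e : E // π e = v}, g (π e.1) = g v := fun e => by rw [e.2]
    rw [tsum_congr h1, tsum_const, hcard v, nsmul_eq_mul]
  have hSig : Summable ((fun e => g (π e)) ∘ (Equiv.sigmaFiberEquiv π)) := by
    apply (summable_sigma_of_nonneg (fun x => hg0 _)).mpr
    refine ⟨fun v => Summable.of_finite, ?_⟩
    have : (fun v => ∑' e : {e : E // π e = v}, g (π e.1)) = fun v => (m : ℝ) * g v := by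
      funext v; exact key v
    exact this ▸ hg.mul_left (m : ℝ)
  have hsum : Summable fun e => g (π e) := (Equiv.sigmaFiberEquiv π).summable_iff.mp hSig
  refine ⟨hsum, ?_⟩
  have := (tsum_fiberwise' π hsum.hasSum).tsum_eq
  rw [← this, tsum_congr key, tsum_mul_left]

private lemma lp2_summable_sq {V : Type*} (f : lp (fun _ : V => ℂ) 2) :
    Summable (fun v => ‖f v‖ ^ 2) := by
  have h := (lp.memℓp f).summable (p := 2) (by norm_num)
  have h2 : ∀ x : ℝ, x ^ ((2 : ℝ≥0∞).toReal) = x ^ (2 : ℕ) := fun x => by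
    rw [show (2 : ℝ≥0∞).toReal = ((2 : ℕ) : ℝ) by simp, Real.rpow_natCast]
  simpa only [h2] using h

private lemma lp2_norm_sq {V : Type*} (f : lp (fun _ : V => ℂ) 2) :
    ‖f‖ ^ 2 = ∑' v, ‖f v‖ ^ 2 := by
  have h := lp.norm_rpow_eq_tsum (p := 2) (by norm_num) f
  have h2 : ∀ x : ℝ, x ^ ((2 : ℝ≥0∞).toReal) = x ^ (2 : ℕ) := fun x => by
    rw [show (2 : ℝ≥0∞).toReal = ((2 : ℕ) : ℝ) by simp, Real.rpow_natCast]
  simpa only [h2] using h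

section L
variable {V E : Type*}
  (o t : E → V)
  (hfin_o : ∀ v, Finite {e : E // o e = v})
  (hfin_t : ∀ v, Finite {e : E // t e = v})
  (q : ℕ)
  (hcard_o : ∀ v, Nat.card {e : E // o e = v} = q + 1)
  (hcard_t : ∀ v, Nat.card {e : E // t e = v} = q + 1)
  (A : lp (fun _ : V => ℂ) 2 →L[ℂ] lp (fun _ : V => ℂ) 2)
  (hA : ∀ (f : lp (fun _ : V => ℂ) 2) (v : V),
      A f v = ∑' e : {e : E // o e = v}, f (t (e : E)))

include hfin_o hfin_t hcard_o hcard_t in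
private lemma summable_edge (f g : lp (fun _ : V => ℂ) 2) :
    Summable (fun e : E => conj (f (t e)) * g (o e)) := by
  apply Summable.of_norm
  have h1 := (tsum_comp_fiber t (q+1) hfin_t hcard_t
    (fun w => sq_nonneg ‖f w‖) (lp2_summable_sq f)).1
  have h2 := (tsum_comp_fiber o (q+1) hfin_o hcard_o
    (fun w => sq_nonneg ‖g w‖) (lp2_summable_sq g)).1
  refine Summable.of_nonneg_of_le (fun e => norm_nonneg _) (fun e => ?_)
    ((h1.add h2).div_const 2)
  rw [norm_mul, RCLike.norm_conj]
  nlinarith [sq_nonneg (‖f (t e)‖ - ‖g (o e)‖), norm_nonneg (f (t e)), norm_nonneg (g (o e))]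

include hfin_o hfin_t hcard_o hcard_t hA in
private lemma inner_A_eq (f g : lp (fun _ : V => ℂ) 2) :
    (inner ℂ (A f) g : ℂ) = ∑' e : E, conj (f (t e)) * g (o e) := by
  have hsum := summable_edge o t hfin_o hfin_t q hcard_o hcard_t f g
  have hfib := (tsum_fiberwise' o hsum.hasSum).tsum_eq
  rw [lp.inner_eq_tsum, ← hfib]
  apply tsum_congr
  intro v
  haveI : Fintype {e : E // o e = v} := Fintype.ofFinite _
  have h1 : (A f) v = ∑ e : {e : E // o e = v}, f (t (e : E)) := by
    rw [hA f v, tsum_fintype]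
  rw [RCLike.inner_apply', h1, tsum_fintype, map_sum, Finset.sum_mul]
  apply Finset.sum_congr rfl
  intro e _
  rw [e.2]

include hfin_o hfin_t hcard_o hcard_t hA in
private lemma normA_le : ‖A‖ ≤ (q : ℝ) + 1 := by
  apply ContinuousLinearMap.opNorm_le_bound _ (by positivity)
  intro f
  have key : ‖A f‖ ^ 2 ≤ (((q : ℝ) + 1) * ‖f‖) ^ 2 := by
    obtain ⟨hGsum, hGtot⟩ := tsum_comp_fiber t (q+1) hfin_t hcard_t
      (fun w => sq_nonneg ‖f w‖) (lp2_summable_sq f)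
    have hfib := tsum_fiberwise' o hGsum.hasSum
    have hpt : ∀ v, ‖(A f) v‖ ^ 2 ≤ ((q : ℝ) + 1) *
        ∑' e : {e : E // o e = v}, ‖f (t (e : E))‖ ^ 2 := by
      intro v
      haveI : Fintype {e : E // o e = v} := Fintype.ofFinite _
      have h1 : (A f) v = ∑ e : {e : E // o e = v}, f (t (e : E)) := by
        rw [hA f v, tsum_fintype]
      rw [h1, tsum_fintype]
      calc ‖∑ e : {e : E // o e = v}, f (t (e : E))‖ ^ 2
          ≤ (∑ e : {e : E // o e = v}, ‖f (t (e : E))‖) ^ 2 := by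
            apply pow_le_pow_left₀ (norm_nonneg _) (norm_sum_le _ _)
        _ ≤ ((q : ℝ) + 1) * ∑ e : {e : E // o e = v}, ‖f (t (e : E))‖ ^ 2 := by
            have hcv : ((Finset.univ : Finset {e : E // o e = v}).card : ℝ) = (q : ℝ) + 1 := by
              rw [Finset.card_univ, ← Nat.card_eq_fintype_card, hcard_o v]; push_cast; ring
            calc (∑ e : {e : E // o e = v}, ‖f (t (e : E))‖) ^ 2
                ≤ ((Finset.univ : Finset {e : E // o e = v}).card : ℝ) *
                  ∑ e : {e : E // o e = v}, ‖f (t (e : E))‖ ^ 2 :=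
                  sq_sum_le_card_mul_sum_sq
              _ = _ := by rw [hcv]
    calc ‖A f‖ ^ 2 = ∑' v, ‖(A f) v‖ ^ 2 := lp2_norm_sq (A f)
      _ ≤ ∑' v, ((q : ℝ) + 1) * ∑' e : {e : E // o e = v}, ‖f (t (e : E))‖ ^ 2 := by
          apply Summable.tsum_le_tsum hpt (lp2_summable_sq (A f)) (hfib.summable.mul_left _)
      _ = ((q : ℝ) + 1) * ∑' v, ∑' e : {e : E // o e = v}, ‖f (t (e : E))‖ ^ 2 :=
          tsum_mul_left
      _ = ((q : ℝ) + 1) * (((q : ℕ) + 1 : ℕ) * ∑' w, ‖f w‖ ^ 2) := by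
          rw [hfib.tsum_eq, hGtot]
      _ = (((q : ℝ) + 1) * ‖f‖) ^ 2 := by
          rw [← lp2_norm_sq f]; push_cast; ring
  have h0 : (0 : ℝ) ≤ ((q : ℝ) + 1) * ‖f‖ := by positivity
  nlinarith [norm_nonneg (A f)]
end L

/-- `Δ(u) := (1+qu²)I − uA` on `ℓ²(VX)`. -/
def DeltaOp {V : Type*}
    (A : lp (fun _ : V => ℂ) 2 →L[ℂ] lp (fun _ : V => ℂ) 2) (q : ℕ) (u : ℝ) :
    lp (fun _ : V => ℂ) 2 →L[ℂ] lp (fun _ : V => ℂ) 2 :=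
  ((1 + (q : ℝ) * u ^ 2 : ℝ) : ℂ) • 1 - ((u : ℝ) : ℂ) • A

/-- `det_Γ(H) := exp(Tr_Γ(log H))`, where, for a free cofinite action (so that all
vertex stabilizers are trivial), `Tr_Γ(B) = Σ_{v∈𝓕₀} ⟨Bδ_v, δ_v⟩`, and `log` is given
by the continuous functional calculus. -/
def detGammaV {V : Type*} [DecidableEq V] (F0 : Set V)
    (H : lp (fun _ : V => ℂ) 2 →L[ℂ] lp (fun _ : V => ℂ) 2) : ℂ :=
  Complex.exp (∑' w : F0, ((cfc (instCFC := IsSelfAdjoint.instContinuousFunctionalCalculus) Real.log H) (lp.single 2 (w : V) 1)) (w : V))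

set_option maxHeartbeats 2000000 in
/-- Theorem 6.3 (iii): the functional equation
`Ξ_{X,Γ}(u) = (1+qu²)^{|VB|}·det_Γ(Δ(u))^{−1} = Ξ_{X,Γ}(1/(qu))`. -/
theorem functional_equation_Xi
    {V E Γ : Type*} [Countable V] [Countable E] [DecidableEq V]
    [Group Γ] [Countable Γ] [MulAction Γ V] [MulAction Γ E]
    -- the graph in the sense of Serre, connected
    (o t : E → V) (bar : E → E)
    (hbar_invol : ∀ e, bar (bar e) = e)
    (hbar_ne : ∀ e, bar e ≠ e)
    (ho_bar : ∀ e, o (bar e) = t e)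
    (hconn : ∀ u v : V, Relation.ReflTransGen (fun a b => ∃ e, o e = a ∧ t e = b) u v)
    -- (q+1)-regular, q ≥ 1
    (q : ℕ) (hq : 1 ≤ q) (hfib : ∀ v, {e | o e = v}.Finite)
    (hreg : ∀ v, Nat.card {e // o e = v} = q + 1)
    -- Γ acts by automorphisms of the graph
    (ho_smul : ∀ (γ : Γ) (e : E), o (γ • e) = γ • o e)
    (ht_smul : ∀ (γ : Γ) (e : E), t (γ • e) = γ • t e)
    (hbar_smul : ∀ (γ : Γ) (e : E), bar (γ • e) = γ • bar e)
    -- without inversions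
    (hnoinv : ∀ (γ : Γ) (e : E), γ • e ≠ bar e)
    -- freely
    (hfree : ∀ (γ : Γ) (v : V), γ • v = v → γ = 1)
    -- cofinitely: 𝓕₀ (the vertices of B = X/Γ) is finite
    (F0 : Set V) (hF0 : ∀ v : V, ∃! w, w ∈ F0 ∧ ∃ γ : Γ, γ • v = w) (hF0fin : F0.Finite)
    -- the adjacency operator A on ℓ²(VX)
    (A : lp (fun _ : V => ℂ) 2 →L[ℂ] lp (fun _ : V => ℂ) 2)
    (hA : ∀ (f : lp (fun _ : V => ℂ) 2) (v : V),
      A f v = ∑' e : {e : E // o e = v}, f (t (e : E))) :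
    ∀ u : ℝ, 0 < |u| → |u| < 1 / (q : ℝ) →
      (((1 + (q : ℝ) * u ^ 2) ^ Nat.card F0 : ℝ) : ℂ) *
          (detGammaV F0 (DeltaOp A q u))⁻¹ =
        (((1 + (q : ℝ) * (1 / ((q : ℝ) * u)) ^ 2) ^ Nat.card F0 : ℝ) : ℂ) *
          (detGammaV F0 (DeltaOp A q (1 / ((q : ℝ) * u))))⁻¹ := by
  intro u hu0 huq
  have hq0 : (0 : ℝ) < (q : ℝ) := by exact_mod_cast Nat.lt_of_lt_of_le Nat.zero_lt_one hq
  have hu_ne : u ≠ 0 := abs_pos.mp hu0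
  rcases isEmpty_or_nonempty V with hV | hV
  · -- degenerate case: empty vertex set
    haveI : IsEmpty (↥F0) := ⟨fun w => isEmptyElim (w : V)⟩
    have hcard0 : Nat.card (↥F0) = 0 := Nat.card_of_isEmpty
    haveI : Subsingleton (lp (fun _ : V => ℂ) 2) :=
      ⟨fun f g => Subtype.ext (funext fun v => isEmptyElim v)⟩
    haveI : Subsingleton (lp (fun _ : V => ℂ) 2 →L[ℂ] lp (fun _ : V => ℂ) 2) :=
      ⟨fun S T => ContinuousLinearMap.ext fun x => Subsingleton.elim _ _⟩
    have hDeq : DeltaOp A q u = DeltaOp A q (1 / ((q : ℝ) * u)) := Subsingleton.elim _ _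
    rw [hDeq]
    simp [hcard0]
  · -- main case
    -- fibration facts
    have hfin_o : ∀ v, Finite {e : E // o e = v} := fun v => (hfib v).to_subtype
    have ebar : ∀ v, {e : E // o e = v} ≃ {e : E // t e = v} := fun v =>
      { toFun := fun e => ⟨bar e.1, by
          have h := ho_bar (bar e.1)
          rw [hbar_invol] at h
          rw [← h]; exact e.2⟩
        invFun := fun e => ⟨bar e.1, by rw [ho_bar]; exact e.2⟩
        left_inv := fun e => Subtype.ext (hbar_invol e.1)
        right_inv := fun e => Subtype.ext (hbar_invol e.1) }
    have hfin_t : ∀ v, Finite {e : E // t e = v} := fun v => Finite.of_equiv _ (ebar v)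
    have hcard_o : ∀ v, Nat.card {e : E // o e = v} = q + 1 := hreg
    have hcard_t : ∀ v, Nat.card {e : E // t e = v} = q + 1 := fun v => by
      rw [← Nat.card_congr (ebar v)]; exact hreg v
    -- A is selfadjoint
    have hsymm : ∀ f g : lp (fun _ : V => ℂ) 2, (inner ℂ (A f) g : ℂ) = inner ℂ f (A g) := by
      intro f g
      rw [inner_A_eq o t hfin_o hfin_t q hcard_o hcard_t A hA f g]
      rw [← inner_conj_symm f (A g),
        inner_A_eq o t hfin_o hfin_t q hcard_o hcard_t A hA g f]
      rw [show (starRingEnd ℂ) (∑' e : E, conj (g (t e)) * f (o e)) =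
          ∑' e : E, star (conj (g (t e)) * f (o e)) from tsum_star]
      have reindex : (fun e : E => star (conj (g (t e)) * f (o e)))
          = fun e : E => conj (f (t (bar e))) * g (o (bar e)) := by
        funext e
        have h1 : t (bar e) = o e := by
          have h := ho_bar (bar e); rw [hbar_invol] at h; exact h.symm
        have h2 : o (bar e) = t e := ho_bar e
        rw [h1, h2]
        simp only [star_mul', RCLike.star_def, Complex.conj_conj]
        ring
      rw [reindex]
      exact ((Function.Involutive.toPerm bar hbar_invol).tsum_eq
        (fun e => conj (f (t e)) * g (o e))).symm
    have hsa : IsSelfAdjoint A :=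
      ContinuousLinearMap.isSelfAdjoint_iff_isSymmetric.mpr fun f g => hsymm f g
    have hAnorm := normA_le o t hfin_o hfin_t q hcard_o hcard_t A hA
    obtain ⟨v0⟩ := hV
    haveI : Nontrivial (lp (fun _ : V => ℂ) 2) := by
      refine nontrivial_of_ne (lp.single (E := fun _ : V => ℂ) 2 v0 (1 : ℂ)) 0 fun h => ?_
      have h1 : (lp.single (E := fun _ : V => ℂ) 2 v0 (1 : ℂ)) v0 = 0 := by rw [h]; simp
      rw [lp.single_apply_self] at h1
      exact one_ne_zero h1
    set H := DeltaOp A q u with hH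
    have hsaH : IsSelfAdjoint H := by
      rw [hH]; unfold DeltaOp
      have hstar : ∀ r : ℝ, star ((r : ℝ) : ℂ) = ((r : ℝ) : ℂ) := fun r => by
        rw [RCLike.star_def, Complex.conj_ofReal]
      exact (IsSelfAdjoint.smul (hstar _) (IsSelfAdjoint.one _)).sub
        (IsSelfAdjoint.smul (hstar _) hsa)
    have habs1 : |u| < 1 := lt_of_lt_of_le huq (by
      rw [div_le_one hq0]; exact_mod_cast hq)
    have hqabs : (q : ℝ) * |u| < 1 := by
      rw [lt_div_iff₀ hq0] at huq; linarith
    have hu2 : (0 : ℝ) < u ^ 2 := by nlinarith [sq_abs u]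
    -- positivity of the spectrum
    have hspec : ∀ x ∈ spectrum ℝ H, (0 : ℝ) < x := by
      intro x hx
      rw [spectrum.mem_iff] at hx
      set cR : ℝ := 1 + (q : ℝ) * u ^ 2 with hcR
      set z : ℝ := (cR - x) / u with hz_def
      have huC : ((u : ℝ) : ℂ) ≠ 0 := Complex.ofReal_ne_zero.mpr hu_ne
      have hzmul : (-(u : ℂ)) * ((z : ℝ) : ℂ) = (x : ℂ) - (cR : ℂ) := by
        rw [hz_def]; push_cast; field_simp; ring
      have hkey : algebraMap ℝ _ x - H =
          (-(u : ℂ)) • ((algebraMap ℂ _ ((z : ℝ) : ℂ)) - A) := by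
        rw [hH]; unfold DeltaOp
        have h1 : algebraMap ℝ (lp (fun _ : V => ℂ) 2 →L[ℂ] lp (fun _ : V => ℂ) 2) x
            = ((x : ℝ) : ℂ) • 1 := by
          rw [IsScalarTower.algebraMap_apply ℝ ℂ
            (lp (fun _ : V => ℂ) 2 →L[ℂ] lp (fun _ : V => ℂ) 2) x,
            Algebra.algebraMap_eq_smul_one, Complex.coe_algebraMap]
        have h2 : algebraMap ℂ (lp (fun _ : V => ℂ) 2 →L[ℂ] lp (fun _ : V => ℂ) 2) ((z : ℝ) : ℂ)
            = ((z : ℝ) : ℂ) • 1 := Algebra.algebraMap_eq_smul_one _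
        rw [h1, h2, smul_sub, smul_smul, hzmul,
          show ((1 + (q : ℝ) * u ^ 2 : ℝ) : ℂ) = ((cR : ℝ) : ℂ) from by rw [hcR],
          sub_smul, neg_smul, sub_neg_eq_add]
        abel
      have hzsp : ((z : ℝ) : ℂ) ∈ spectrum ℂ A := by
        rw [spectrum.mem_iff]
        intro hun
        apply hx
        rw [hkey]
        have hu_ne' : (-(u : ℂ)) ≠ 0 := by
          simp only [ne_eq, neg_eq_zero, Complex.ofReal_eq_zero]; exact hu_ne
        have h1 : IsUnit ((-(u : ℂ)) • (1 : lp (fun _ : V => ℂ) 2 →L[ℂ] lp (fun _ : V => ℂ) 2)) :=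
          ⟨⟨(-(u : ℂ)) • 1, (-(u : ℂ))⁻¹ • 1,
            by rw [smul_mul_smul_comm, mul_inv_cancel₀ hu_ne', one_smul, one_mul],
            by rw [smul_mul_smul_comm, inv_mul_cancel₀ hu_ne', one_smul, one_mul]⟩, rfl⟩
        rw [← one_mul ((algebraMap ℂ _ ((z : ℝ) : ℂ)) - A), ← smul_mul_assoc]
        exact h1.mul hun
      have hzn := spectrum.norm_le_norm_of_mem hzsp
      have hzabs : |z| ≤ (q : ℝ) + 1 := by
        rw [Complex.norm_real, Real.norm_eq_abs] at hzn
        exact le_trans hzn hAnorm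
      have habs_ne : |u| ≠ 0 := ne_of_gt (abs_pos.mpr hu_ne)
      have h2 : |cR - x| ≤ ((q : ℝ) + 1) * |u| := by
        rw [hz_def, abs_div] at hzabs
        calc |cR - x| = |cR - x| / |u| * |u| := by rw [div_mul_cancel₀ _ habs_ne]
          _ ≤ ((q : ℝ) + 1) * |u| := mul_le_mul_of_nonneg_right hzabs (abs_nonneg u)
      have h3 : cR - x ≤ ((q : ℝ) + 1) * |u| := le_trans (le_abs_self _) h2
      rw [hcR] at h3
      nlinarith [sq_abs u, abs_nonneg u]
    -- the scaling identity Δ(1/(qu)) = k • Δ(u)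
    set k : ℝ := ((q : ℝ) * u ^ 2)⁻¹ with hk_def
    have hk : 0 < k := inv_pos.mpr (mul_pos hq0 hu2)
    have hqu_ne : (q : ℝ) * u ≠ 0 := mul_ne_zero (ne_of_gt hq0) hu_ne
    have hqR : (q : ℝ) ≠ 0 := ne_of_gt hq0
    have id1 : 1 + (q : ℝ) * (1 / ((q : ℝ) * u)) ^ 2 = k * (1 + (q : ℝ) * u ^ 2) := by
      rw [hk_def]; field_simp; ring
    have id2 : 1 / ((q : ℝ) * u) = k * u := by
      rw [hk_def]; field_simp
    have hDv : DeltaOp A q (1 / ((q : ℝ) * u)) = k • H := by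
      rw [hH]; unfold DeltaOp
      rw [smul_sub, ← smul_assoc, ← smul_assoc]
      congr 2
      · rw [Complex.real_smul, ← Complex.ofReal_mul, ← id1]
      · rw [Complex.real_smul, ← Complex.ofReal_mul, ← id2]
    -- continuity of log on the spectrum
    letI : ContinuousFunctionalCalculus ℝ (lp (fun _ : V => ℂ) 2 →L[ℂ] lp (fun _ : V => ℂ) 2) IsSelfAdjoint :=
      IsSelfAdjoint.instContinuousFunctionalCalculus
    have hcont1 : ContinuousOn Real.log (spectrum ℝ H) :=
      Real.continuousOn_log.mono fun x hx =>
        Set.mem_compl_singleton_iff.mpr (ne_of_gt (hspec x hx))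
    have hcont2 : ContinuousOn Real.log ((k * ·) '' spectrum ℝ H) :=
      Real.continuousOn_log.mono (by
        rintro y ⟨x, hx, rfl⟩
        exact Set.mem_compl_singleton_iff.mpr (ne_of_gt (mul_pos hk (hspec x hx))))
    have hlog : cfc Real.log (k • H)
        = algebraMap ℝ (lp (fun _ : V => ℂ) 2 →L[ℂ] lp (fun _ : V => ℂ) 2) (Real.log k)
          + cfc Real.log H := by
      rw [← cfc_comp_const_mul k Real.log H hcont2 hsaH]
      rw [cfc_congr (g := fun x : ℝ => Real.log k + Real.log x)
        (fun x hx => Real.log_mul (ne_of_gt hk) (ne_of_gt (hspec x hx)))]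
      exact cfc_const_add (Real.log k) Real.log H hcont1 hsaH
    haveI : Fintype (↥F0) := hF0fin.fintype
    have hdetv : detGammaV F0 (DeltaOp A q (1 / ((q : ℝ) * u)))
        = ((k : ℝ) : ℂ) ^ Nat.card (↥F0) * detGammaV F0 H := by
      rw [hDv, detGammaV, detGammaV]
      erw [hlog]; rw [tsum_fintype, tsum_fintype]
      have hterm : ∀ w : ↥F0,
          ((algebraMap ℝ (lp (fun _ : V => ℂ) 2 →L[ℂ] lp (fun _ : V => ℂ) 2) (Real.log k)
            + cfc Real.log H) (lp.single 2 (w : V) 1)) (w : V)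
          = ((Real.log k : ℝ) : ℂ) + ((cfc Real.log H) (lp.single 2 (w : V) 1)) (w : V) := by
        intro w
        rw [ContinuousLinearMap.add_apply, Algebra.algebraMap_eq_smul_one,
          ContinuousLinearMap.smul_apply, ContinuousLinearMap.one_apply]
        rw [lp.coeFn_add, Pi.add_apply]
        congr 1
        rw [lp.coeFn_smul, Pi.smul_apply, lp.single_apply_self, Complex.real_smul, mul_one]
      rw [Finset.sum_congr rfl (fun w _ => hterm w), Finset.sum_add_distrib,
        Finset.sum_const, Finset.card_univ, ← Nat.card_eq_fintype_card, nsmul_eq_mul,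
        Complex.exp_add, Complex.exp_nat_mul, ← Complex.ofReal_exp, Real.exp_log hk]
      rfl
    rw [hdetv]
    have hk0 : ((k : ℝ) : ℂ) ≠ 0 := Complex.ofReal_ne_zero.mpr (ne_of_gt hk)
    have hdg0 : detGammaV F0 H ≠ 0 := Complex.exp_ne_zero _
    rw [id1, mul_inv]
    push_cast [mul_pow]
    field_simp
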